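/- For b : {1,...,n} → {1,...,n} with b(i) ≥ i for all i and β₂ ≥ 0, the normalizing constant of the twisted measure ℚ_{b,β₂}(τ) ∝ e^{β₂ C(τ)} 1[τ(i) ≤ b(i) ∀i] equals ∏_{l=1}^n (e^{β₂} + N_l − 1), i.e., ∑_{τ ∈ Sₙ: τ(i) ≤ b(i) ∀i} e^{β₂ C(τ)} = ∏_{l=1}^n (e^{β₂} + N_l − 1), where C(τ) is the number of cycles of τ and N_l = #{i : b(i) ≥ l} − (n − l). -/

import Mathlib

open Equiv Equiv.Perm Finset

private lemma isCycle_mul_swap {α : Type*} [DecidableEq α] [Fintype α] {c : Equiv.Perm α}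
    (hc : c.IsCycle) {a b : α} (ha : a ∈ c.support) (hb : b ∉ c.support) :
    (c * Equiv.swap a b).IsCycle := by
  have hca : c a ≠ a := mem_support.mp ha
  have hcb : c b = b := notMem_support.mp hb
  have hab : a ≠ b := fun h => hb (h ▸ ha)
  set f := c * Equiv.swap a b with hf
  have hfb : f b = c a := by simp [hf, mul_apply, swap_apply_right]
  have hfa : f a = b := by simp [hf, mul_apply, swap_apply_left, hcb]
  have hfx : ∀ x, x ≠ a → x ≠ b → f x = c x := fun x hxa hxb => by
    simp [hf, mul_apply, swap_apply_of_ne_of_ne hxa hxb]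
  have key : ∀ k : ℕ, SameCycle f b ((c ^ (k + 1)) a) := by
    intro k
    induction k with
    | zero => exact ⟨1, by simpa using hfb⟩
    | succ k ih =>
      by_cases hz : (c ^ (k + 1)) a = a
      · have h2 : (c ^ (k + 1 + 1)) a = c a := by
          rw [pow_succ', mul_apply, hz]
        rw [h2]
        exact ⟨1, by simpa using hfb⟩
      · have hzs : (c ^ (k + 1)) a ∈ c.support := pow_apply_mem_support.mpr ha
        have hzb : (c ^ (k + 1)) a ≠ b := fun h => hb (h ▸ hzs)
        have hstep : f ((c ^ (k + 1)) a) = (c ^ (k + 1 + 1)) a := by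
          rw [hfx _ hz hzb, pow_succ' c (k + 1), mul_apply]
        exact ih.trans ⟨1, by simpa using hstep⟩
  refine ⟨b, ?_, ?_⟩
  · rw [hfb]; exact fun h => hb (h ▸ apply_mem_support.mpr ha)
  · intro y hy
    rcases eq_or_ne y b with rfl | hyb
    · exact SameCycle.refl _ _
    rcases eq_or_ne y a with h | hya
    · rw [h]
      exact SameCycle.symm ⟨1, by simpa using hfa⟩
    · have hyc : y ∈ c.support := mem_support.mpr (by rwa [hfx y hya hyb] at hy)
      obtain ⟨i, hia⟩ := hc.exists_pow_eq hca (mem_support.mp hyc)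
      cases i with
      | zero => exact absurd hia.symm (by simpa using hya)
      | succ k => exact hia ▸ key k

/-- Number of cycles of a permutation, counting fixed points as cycles. -/
def numCycles {n : ℕ} (τ : Equiv.Perm (Fin n)) : ℕ :=
  τ.cycleType.card + (Finset.univ.filter fun x => τ x = x).card

private lemma numCycles_mul_swap {m : ℕ} (g : Equiv.Perm (Fin m)) {a b : Fin m}
    (hab : a ≠ b) (hgb : g b = b) :
    numCycles (g * Equiv.swap a b) + 1 = numCycles g := by
  classical
  have hgab : g a ≠ b := fun h => hab (g.injective (h.trans hgb.symm))
  have hbmem : b ∈ Finset.univ.filter (fun x : Fin m => g x = x) :=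
    mem_filter.mpr ⟨mem_univ _, hgb⟩
  by_cases hga : g a = a
  · -- a is a fixed point of g
    have hdis : Disjoint g (Equiv.swap a b) := by
      intro x
      rcases eq_or_ne x a with rfl | hxa
      · exact Or.inl hga
      rcases eq_or_ne x b with rfl | hxb
      · exact Or.inl hgb
      · exact Or.inr (swap_apply_of_ne_of_ne hxa hxb)
    have hct : Multiset.card (g * Equiv.swap a b).cycleType
        = Multiset.card g.cycleType + 1 := by
      rw [hdis.cycleType_mul, (isCycle_swap hab).cycleType]
      simp
    have hamem : a ∈ Finset.univ.filter (fun x : Fin m => g x = x) :=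
      mem_filter.mpr ⟨mem_univ _, hga⟩
    have hbmem' : b ∈ (Finset.univ.filter (fun x : Fin m => g x = x)).erase a :=
      mem_erase.mpr ⟨hab.symm, hbmem⟩
    have hfix : (Finset.univ.filter fun x : Fin m => (g * Equiv.swap a b) x = x)
        = ((Finset.univ.filter fun x : Fin m => g x = x).erase a).erase b := by
      ext x
      simp only [mem_filter, mem_univ, true_and, mem_erase, mul_apply]
      constructor
      · intro h
        rcases eq_or_ne x a with rfl | hxa
        · rw [swap_apply_left, hgb] at h
          exact absurd h hab.symm
        rcases eq_or_ne x b with rfl | hxb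
        · rw [swap_apply_right] at h
          exact absurd h hgab
        · rw [swap_apply_of_ne_of_ne hxa hxb] at h
          exact ⟨hxb, hxa, h⟩
      · rintro ⟨hxb, hxa, hx⟩
        rw [swap_apply_of_ne_of_ne hxa hxb]
        exact hx
    have e1 := card_erase_of_mem hamem
    have e2 := card_erase_of_mem hbmem'
    have hpos : 0 < ((Finset.univ.filter fun x : Fin m => g x = x).erase a).card :=
      card_pos.mpr ⟨b, hbmem'⟩
    unfold numCycles
    rw [hfix, hct]
    omega
  · -- a is moved by g
    set c := g.cycleOf a with hc
    have hcyc : IsCycle c := isCycle_cycleOf g hga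
    have hasupp : a ∈ g.support := mem_support.mpr hga
    have hac : a ∈ c.support := mem_support_cycleOf_iff.mpr ⟨SameCycle.refl _ _, hasupp⟩
    have hbc : b ∉ c.support := fun h => (notMem_support.mpr hgb) (support_cycleOf_le g a h)
    set d := g * c⁻¹ with hd
    have hd_same : ∀ x, SameCycle g a x → d x = x := by
      intro x hx
      have h1 : c⁻¹ x = g⁻¹ x := by
        rw [hc, cycleOf_inv]
        exact SameCycle.cycleOf_apply ((sameCycle_inv).mpr hx)
      rw [hd, mul_apply, h1, ← mul_apply, mul_inv_cancel, one_apply]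
    have hd_not : ∀ x, ¬SameCycle g a x → c x = x ∧ d x = g x := by
      intro x hx
      have h1 : c x = x := cycleOf_apply_of_not_sameCycle hx
      have h2 : c⁻¹ x = x := (Equiv.Perm.inv_eq_iff_eq).mpr h1.symm
      exact ⟨h1, by rw [hd, mul_apply, h2]⟩
    have hg_eq : g = c * d := by
      apply Equiv.ext
      intro x
      rcases em (SameCycle g a x) with hx | hx
      · rw [mul_apply, hd_same x hx]
        exact (SameCycle.cycleOf_apply hx).symm
      · rw [mul_apply, (hd_not x hx).2]
        exact ((hd_not (g x) (fun h => hx (sameCycle_apply_right.mp h))).1).symm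
    have hdc_disj : Disjoint c d := fun x =>
      (em (SameCycle g a x)).elim (fun h => Or.inr (hd_same x h))
        (fun h => Or.inl (hd_not x h).1)
    have hda : d a = a := hd_same a (SameCycle.refl _ _)
    have hdb : d b = b := by
      rcases em (SameCycle g a b) with h | h
      · exact hd_same b h
      · rw [(hd_not b h).2, hgb]
    have hds_disj : Disjoint d (Equiv.swap a b) := by
      intro x
      rcases eq_or_ne x a with rfl | hxa
      · exact Or.inl hda
      rcases eq_or_ne x b with rfl | hxb
      · exact Or.inl hdb
      · exact Or.inr (swap_apply_of_ne_of_ne hxa hxb)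
    have hmul : g * Equiv.swap a b = (c * Equiv.swap a b) * d := by
      rw [hg_eq, mul_assoc, hds_disj.commute.eq, ← mul_assoc]
    have hcs_cyc : IsCycle (c * Equiv.swap a b) := isCycle_mul_swap hcyc hac hbc
    have hcsd_disj : Disjoint (c * Equiv.swap a b) d := by
      intro x
      rcases eq_or_ne x a with rfl | hxa
      · exact Or.inr hda
      rcases eq_or_ne x b with rfl | hxb
      · exact Or.inr hdb
      rcases em (SameCycle g a x) with h | h
      · exact Or.inr (hd_same x h)
      · exact Or.inl (by rw [mul_apply, swap_apply_of_ne_of_ne hxa hxb, (hd_not x h).1])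
    have hct1 : Multiset.card (g * Equiv.swap a b).cycleType
        = Multiset.card d.cycleType + 1 := by
      rw [hmul, hcsd_disj.cycleType_mul, hcs_cyc.cycleType]
      simp [add_comm]
    have hct2 : Multiset.card g.cycleType = Multiset.card d.cycleType + 1 := by
      conv_lhs => rw [hg_eq]
      rw [hdc_disj.cycleType_mul, hcyc.cycleType]
      simp [add_comm]
    have hfix : (Finset.univ.filter fun x : Fin m => (g * Equiv.swap a b) x = x)
        = (Finset.univ.filter fun x : Fin m => g x = x).erase b := by
      ext x
      simp only [mem_filter, mem_univ, true_and, mem_erase, mul_apply]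
      constructor
      · intro h
        rcases eq_or_ne x a with rfl | hxa
        · rw [swap_apply_left] at h
          exact absurd (h.symm.trans hgb) hab
        rcases eq_or_ne x b with rfl | hxb
        · rw [swap_apply_right] at h
          exact absurd h hgab
        · rw [swap_apply_of_ne_of_ne hxa hxb] at h
          exact ⟨hxb, h⟩
      · rintro ⟨hxb, hx⟩
        have hxa : x ≠ a := fun h => hga (h ▸ hx)
        rw [swap_apply_of_ne_of_ne hxa hxb]
        exact hx
    have e1 := card_erase_of_mem hbmem
    have hpos : 0 < (Finset.univ.filter fun x : Fin m => g x = x).card :=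
      card_pos.mpr ⟨b, hbmem⟩
    unfold numCycles
    rw [hfix, hct1, hct2]
    omega

private def toSub (n : ℕ) : Fin n ≃ {x : Fin (n + 1) // x.val < n} where
  toFun i := ⟨i.castSucc, by simp⟩
  invFun x := ⟨x.1.val, x.2⟩
  left_inv i := by ext; simp
  right_inv x := by ext; simp [Fin.castSucc, Fin.castAdd, Fin.castLE]

private def pext {n : ℕ} (σ : Equiv.Perm (Fin n)) : Equiv.Perm (Fin (n + 1)) :=
  σ.extendDomain (toSub n)

private lemma pext_castSucc {n : ℕ} (σ : Equiv.Perm (Fin n)) (i : Fin n) :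
    pext σ i.castSucc = (σ i).castSucc := by
  have h := Equiv.Perm.extendDomain_apply_image σ (toSub n) i
  simpa [toSub, pext] using h

private lemma pext_last {n : ℕ} (σ : Equiv.Perm (Fin n)) :
    pext σ (Fin.last n) = Fin.last n :=
  Equiv.Perm.extendDomain_apply_not_subtype σ (toSub n) (by simp)

private lemma numCycles_pext {n : ℕ} (σ : Equiv.Perm (Fin n)) :
    numCycles (pext σ) = numCycles σ + 1 := by
  unfold numCycles
  have hct : (pext σ).cycleType = σ.cycleType := cycleType_extendDomain (toSub n)
  have hfix : (Finset.univ.filter fun x : Fin (n + 1) => pext σ x = x).card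
      = (Finset.univ.filter fun x : Fin n => σ x = x).card + 1 := by
    rw [Finset.card_filter, Finset.card_filter, Fin.sum_univ_castSucc]
    congr 1
    · apply Finset.sum_congr rfl
      intro i _
      congr 1
      rw [pext_castSucc]
      simp only [eq_iff_iff]
      exact ⟨fun h => Fin.castSucc_injective n h, fun h => by rw [h]⟩
    · simp [pext_last]
  rw [hct, hfix]
  ring

private lemma pext_surj {n : ℕ} (τ : Equiv.Perm (Fin (n + 1)))
    (h : τ (Fin.last n) = Fin.last n) : ∃ σ : Equiv.Perm (Fin n), pext σ = τ := by
  have hne : ∀ x : Fin (n + 1), x.val < n ↔ x ≠ Fin.last n := by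
    intro x
    constructor
    · intro hx he
      rw [he] at hx
      simp at hx
    · intro hx
      have := x.isLt
      have : x.val ≠ n := fun hv => hx (Fin.ext hv)
      omega
  have hp : ∀ x : Fin (n + 1), x.val < n ↔ (τ x).val < n := by
    intro x
    rw [hne, hne]
    constructor
    · intro hx he
      exact hx (τ.injective (he.trans h.symm))
    · intro hx he
      exact hx (by rw [he, h])
  refine ⟨(toSub n).symm.permCongr (τ.subtypePerm (fun x => (hp x).symm)), ?_⟩
  apply Equiv.ext
  intro x
  by_cases hx : x.val < n
  · have hximg : x = ((toSub n) ⟨x.val, hx⟩ : {y : Fin (n+1) // y.val < n}) := by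
      ext
      simp [toSub, Fin.castSucc, Fin.castAdd, Fin.castLE]
    rw [hximg]
    rw [show (((toSub n) ⟨x.val, hx⟩ : {y : Fin (n+1) // y.val < n}) : Fin (n+1))
        = ((toSub n) ⟨x.val, hx⟩ : {y : Fin (n+1) // y.val < n}).val from rfl]
    rw [pext, Equiv.Perm.extendDomain_apply_image]
    simp [Equiv.permCongr_apply, Equiv.Perm.subtypePerm_apply]
  · have hxl : x = Fin.last n := by
      have := x.isLt
      apply Fin.ext
      simp only [Fin.val_last]
      omega
    rw [hxl, pext_last, h]

private lemma key_sum (n : ℕ) (x : ℝ) (b : Fin n → Fin n) (hb : ∀ i, i ≤ b i) :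
    ∑ τ ∈ Finset.univ.filter (fun τ : Equiv.Perm (Fin n) => ∀ i, τ i ≤ b i),
        x ^ numCycles τ
      = ∏ l : Fin n,
        (x + (((Finset.univ.filter (fun i : Fin n => l ≤ b i)).card : ℝ)
            - ((n : ℝ) - 1 - (l.val : ℝ))) - 1) := by
  induction n with
  | zero =>
    have h1 : ∀ τ : Equiv.Perm (Fin 0), τ = 1 := fun τ => Equiv.ext fun i => i.elim0
    have h2 : (Finset.univ.filter (fun τ : Equiv.Perm (Fin 0) => ∀ i, τ i ≤ b i))
        = {1} := by
      ext τ
      simp only [mem_filter, mem_univ, true_and, Finset.mem_singleton]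
      exact ⟨fun _ => h1 τ, fun _ i => i.elim0⟩
    rw [h2, Finset.sum_singleton]
    have h3 : numCycles (1 : Equiv.Perm (Fin 0)) = 0 := by
      unfold numCycles
      simp
    rw [h3, pow_zero]
    simp
  | succ n IH =>
    -- basic facts about the constraint at the top
    have hblast : b (Fin.last n) = Fin.last n := le_antisymm (Fin.le_last _) (hb _)
    set A := Finset.univ.filter (fun i : Fin (n + 1) => Fin.last n ≤ b i) with hA
    have hmemA : ∀ j, j ∈ A ↔ b j = Fin.last n := by
      intro j
      rw [hA, mem_filter]
      simp only [mem_univ, true_and]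
      exact ⟨fun h => le_antisymm (Fin.le_last _) h, fun h => h ▸ le_refl _⟩
    have hlastA : Fin.last n ∈ A := (hmemA _).mpr hblast
    -- restricted constraint function
    have hn1 : ∀ i : Fin n, min (b i.castSucc).val (n - 1) < n := by
      intro i
      have := i.isLt
      omega
    set b' : Fin n → Fin n := fun i => ⟨min (b i.castSucc).val (n - 1), hn1 i⟩ with hb'def
    have hb' : ∀ i, i ≤ b' i := by
      intro i
      rw [Fin.le_def]
      have h1 : i.val ≤ (b i.castSucc).val := by
        have h := hb i.castSucc
        rw [Fin.le_def] at h
        simpa using h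
      have := i.isLt
      simp only [hb'def]
      omega
    -- cardinality comparison lemma
    have hcard : ∀ l : Fin n,
        (Finset.univ.filter (fun i : Fin (n + 1) => l.castSucc ≤ b i)).card
        = (Finset.univ.filter (fun i : Fin n => l ≤ b' i)).card + 1 := by
      intro l
      rw [Finset.card_filter, Finset.card_filter, Fin.sum_univ_castSucc]
      congr 1
      · apply Finset.sum_congr rfl
        intro i _
        congr 1
        simp only [eq_iff_iff]
        rw [Fin.le_def, Fin.le_def]
        simp only [Fin.coe_castSucc, hb'def]
        have := l.isLt
        constructor <;> intro h <;> omega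
      · rw [hblast]
        simp [Fin.le_def]
    -- the sets
    set T := Finset.univ.filter (fun τ : Equiv.Perm (Fin (n + 1)) => ∀ i, τ i ≤ b i) with hT
    set Sn := Finset.univ.filter (fun σ : Equiv.Perm (Fin n) => ∀ i, σ i ≤ b' i) with hSn
    -- fibers over the preimage of the top value
    have hmaps : ∀ τ ∈ T, τ⁻¹ (Fin.last n) ∈ A := by
      intro τ hτ
      rw [hmemA]
      apply le_antisymm (Fin.le_last _)
      have h1 := (Finset.mem_filter.mp hτ).2 (τ⁻¹ (Fin.last n))
      rwa [← Equiv.Perm.mul_apply, mul_inv_cancel, Equiv.Perm.one_apply] at h1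
    -- each fiber is an image
    have hfib_eq : ∀ j ∈ A, T.filter (fun τ => τ⁻¹ (Fin.last n) = j)
        = Sn.image (fun σ => pext σ * Equiv.swap j (Fin.last n)) := by
      intro j hj
      have hbj : b j = Fin.last n := (hmemA j).mp hj
      ext τ
      simp only [hT, hSn, Finset.mem_filter, Finset.mem_image, Finset.mem_univ, true_and]
      constructor
      · rintro ⟨hcon, hinv⟩
        have hτj : τ j = Fin.last n := by rw [← hinv, ← Equiv.Perm.mul_apply, mul_inv_cancel, Equiv.Perm.one_apply]
        have hτ'last : (τ * Equiv.swap j (Fin.last n)) (Fin.last n) = Fin.last n := by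
          rw [Equiv.Perm.mul_apply, Equiv.swap_apply_right, hτj]
        obtain ⟨σ, hσ⟩ := pext_surj _ hτ'last
        refine ⟨σ, ?_, ?_⟩
        · intro i
          have h1 : (σ i).castSucc = (τ * Equiv.swap j (Fin.last n)) i.castSucc := by
            rw [← hσ, pext_castSucc]
          have hvl : (σ i).val = ((τ * Equiv.swap j (Fin.last n)) i.castSucc).val := by
            rw [← h1, Fin.coe_castSucc]
          rw [Fin.le_def]
          simp only [hb'def]
          by_cases hij : i.castSucc = j
          · have h2 : (τ * Equiv.swap j (Fin.last n)) i.castSucc = τ (Fin.last n) := by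
              rw [Equiv.Perm.mul_apply, hij, Equiv.swap_apply_left]
            have h3 : τ (Fin.last n) ≠ Fin.last n := by
              intro h
              have h5 : (Fin.last n) = j := τ.injective (h.trans hτj.symm)
              rw [← h5] at hij
              have h6 := congrArg Fin.val hij
              simp only [Fin.coe_castSucc, Fin.val_last] at h6
              have := i.isLt
              omega
            have h4 : (τ (Fin.last n)).val < n := by
              have h5 := (τ (Fin.last n)).isLt
              have h6 : (τ (Fin.last n)).val ≠ n := fun hv => h3 (Fin.ext (by simp [hv]))
              omega
            rw [hvl, h2]
            have h7 : (b i.castSucc).val = n := by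
              rw [hij, hbj, Fin.val_last]
            have := i.isLt
            omega
          · have hcsl : i.castSucc ≠ Fin.last n := (Fin.castSucc_lt_last i).ne
            have h2 : (τ * Equiv.swap j (Fin.last n)) i.castSucc = τ i.castSucc := by
              rw [Equiv.Perm.mul_apply, Equiv.swap_apply_of_ne_of_ne hij hcsl]
            have h3 : τ i.castSucc ≠ Fin.last n := by
              intro h
              exact hij (τ.injective (h.trans hτj.symm))
            have h4 : (τ i.castSucc).val < n := by
              have h5 := (τ i.castSucc).isLt
              have h6 : (τ i.castSucc).val ≠ n := fun hv => h3 (Fin.ext (by simp [hv]))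
              omega
            have h5 : (τ i.castSucc).val ≤ (b i.castSucc).val := by
              have h6 := hcon i.castSucc
              rwa [Fin.le_def] at h6
            rw [hvl, h2]
            omega
        · rw [hσ, mul_assoc, Equiv.swap_mul_self, mul_one]
      · rintro ⟨σ, hσcon, rfl⟩
        have hpj : (pext σ * Equiv.swap j (Fin.last n)) j = Fin.last n := by
          rw [Equiv.Perm.mul_apply, Equiv.swap_apply_left, pext_last]
        constructor
        · intro i
          by_cases hil : i = Fin.last n
          · rw [hil, hblast]
            exact Fin.le_last _
          · by_cases hij : i = j
            · rw [hij, hpj, hbj]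
            · have hi' : i.val < n := by
                have := i.isLt
                have : i.val ≠ n := fun hv => hil (Fin.ext (by simp [hv]))
                omega
              have hic : (⟨i.val, hi'⟩ : Fin n).castSucc = i := by
                ext
                simp
              have h2 : (pext σ * Equiv.swap j (Fin.last n)) i = pext σ i := by
                rw [Equiv.Perm.mul_apply, Equiv.swap_apply_of_ne_of_ne hij hil]
              rw [h2, ← hic, pext_castSucc, Fin.le_def, Fin.coe_castSucc]
              have h3 := hσcon ⟨i.val, hi'⟩
              rw [Fin.le_def] at h3
              simp only [hb'def] at h3
              rw [hic] at h3
              have h4 : (b ((⟨i.val, hi'⟩ : Fin n).castSucc)).val = (b i).val := by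
                rw [hic]
              omega
        · exact (Equiv.Perm.inv_eq_iff_eq).mpr hpj.symm
    -- injectivity of the parametrization
    have hinj : ∀ j, ∀ σ1 ∈ Sn, ∀ σ2 ∈ Sn,
        pext σ1 * Equiv.swap j (Fin.last n) = pext σ2 * Equiv.swap j (Fin.last n)
        → σ1 = σ2 := by
      intro j σ1 _ σ2 _ h
      have h2 : pext σ1 = pext σ2 := mul_right_cancel h
      apply Equiv.ext
      intro i
      have h3 := congrArg (fun e : Equiv.Perm (Fin (n + 1)) => e i.castSucc) h2
      simp only [pext_castSucc] at h3
      exact Fin.castSucc_injective n h3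
    -- weight of each element of a fiber
    have hweight : ∀ j, j ≠ Fin.last n → ∀ σ : Equiv.Perm (Fin n),
        numCycles (pext σ * Equiv.swap j (Fin.last n)) = numCycles σ := by
      intro j hjl σ
      have h := numCycles_mul_swap (pext σ) hjl (pext_last σ)
      rw [numCycles_pext] at h
      omega
    -- assemble the left-hand side
    have hS : ∑ τ ∈ T, x ^ numCycles τ
        = (∑ j ∈ A, if j = Fin.last n then x else 1) * ∑ σ ∈ Sn, x ^ numCycles σ := by
      rw [← Finset.sum_fiberwise_of_maps_to hmaps (fun τ => x ^ numCycles τ)]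
      rw [Finset.sum_mul_sum]
      apply Finset.sum_congr rfl
      intro j hj
      rw [hfib_eq j hj, Finset.sum_image (hinj j)]
      apply Finset.sum_congr rfl
      intro σ _
      by_cases hjl : j = Fin.last n
      · rw [if_pos hjl, hjl]
        rw [show Equiv.swap (Fin.last n) (Fin.last n) = 1 from Equiv.swap_self _]
        rw [mul_one, numCycles_pext, pow_succ]
        ring
      · rw [if_neg hjl, hweight j hjl σ, one_mul]
    -- the coefficient sum
    have hApos : 0 < A.card := Finset.card_pos.mpr ⟨Fin.last n, hlastA⟩
    have hAsum : (∑ j ∈ A, if j = Fin.last n then x else 1)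
        = x + ((A.card : ℝ) - 1) := by
      rw [← Finset.add_sum_erase A _ hlastA, if_pos rfl]
      congr 1
      rw [Finset.sum_congr rfl (fun j hj => if_neg (Finset.mem_erase.mp hj).1),
        Finset.sum_const, Finset.card_erase_of_mem hlastA, nsmul_eq_mul, mul_one]
      rw [Nat.cast_sub hApos]
      simp
    -- the right-hand side
    rw [Fin.prod_univ_castSucc]
    have hfactor_last :
        (x + (((Finset.univ.filter (fun i : Fin (n + 1) => Fin.last n ≤ b i)).card : ℝ)
          - (((n : ℕ) + 1 : ℝ) - 1 - ((Fin.last n).val : ℝ))) - 1)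
        = x + ((A.card : ℝ) - 1) := by
      rw [← hA]
      simp only [Fin.val_last]
      push_cast
      ring
    have hprod : (∏ l : Fin n,
        (x + (((Finset.univ.filter (fun i : Fin (n + 1) => l.castSucc ≤ b i)).card : ℝ)
          - (((n : ℕ) + 1 : ℝ) - 1 - ((l.castSucc).val : ℝ))) - 1))
        = ∏ l : Fin n,
        (x + (((Finset.univ.filter (fun i : Fin n => l ≤ b' i)).card : ℝ)
            - ((n : ℝ) - 1 - (l.val : ℝ))) - 1) := by
      apply Finset.prod_congr rfl
      intro l _
      rw [hcard l]
      simp only [Fin.coe_castSucc]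
      push_cast
      ring
    calc ∑ τ ∈ T, x ^ numCycles τ
        = (x + ((A.card : ℝ) - 1)) * ∑ σ ∈ Sn, x ^ numCycles σ := by rw [hS, hAsum]
      _ = (x + ((A.card : ℝ) - 1)) * ∏ l : Fin n,
            (x + (((Finset.univ.filter (fun i : Fin n => l ≤ b' i)).card : ℝ)
              - ((n : ℝ) - 1 - (l.val : ℝ))) - 1) := by rw [hSn, IH b' hb']
      _ = _ := by
          rw [← hprod, ← hfactor_last]
          push_cast
          ring

theorem twisted_normalizing_constant (n : ℕ) (hn : 1 ≤ n) (β₂ : ℝ) (hβ₂ : 0 ≤ β₂)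
    (b : Fin n → Fin n) (hb : ∀ i, i ≤ b i) :
    ∑ τ ∈ Finset.univ.filter (fun τ : Equiv.Perm (Fin n) => ∀ i, τ i ≤ b i),
        Real.exp (β₂ * (numCycles τ : ℝ)) =
      ∏ l : Fin n,
        (Real.exp β₂
          + (((Finset.univ.filter (fun i : Fin n => l ≤ b i)).card : ℝ)
              - ((n : ℝ) - 1 - (l.val : ℝ)))
          - 1) := by
  rw [← key_sum n (Real.exp β₂) b hb]
  apply Finset.sum_congr rfl
  intro τ _
  rw [mul_comm, Real.exp_nat_mul]
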